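/- Let a > 0, r ∈ (0,1), and let f ∈ C²([0,r]) solve the profile equation on (0,r] with f(0) = a, f'(0) = 0. Then f(x) > 0 for all x ∈ [0,r] and f''(x) < 0 for all x ∈ [0,r). -/

import Mathlib

open Set Filter Topology

/-- `f ∈ C²(S)` solves the profile equation
`f''(x) = (1 + f'(x)²)[f'(x)(x - 1/x) - f(x)]` for `x ∈ S \ {0}`,
with initial data `f(0) = a`, `f'(0) = 0`. -/
def SolvesProfile (a : ℝ) (S : Set ℝ) (f : ℝ → ℝ) : Prop :=
  ContDiffOn ℝ 2 f S ∧ f 0 = a ∧ derivWithin f S 0 = 0 ∧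
  ∀ x ∈ S, x ≠ 0 →
    derivWithin (derivWithin f S) S x
      = (1 + (derivWithin f S x) ^ 2) * (derivWithin f S x * (x - 1 / x) - f x)

/-- If `f ∈ C²([0,r])` (`0 < r < 1`) solves the profile equation with `f(0) = a > 0`,
`f'(0) = 0`, then `f > 0` on `[0,r]` and `f'' < 0` on `[0,r)`. -/
theorem profile_positive_concave (a r : ℝ) (ha : 0 < a) (hr0 : 0 < r) (hr1 : r < 1)
    (f : ℝ → ℝ) (hf : SolvesProfile a (Icc 0 r) f) :
    (∀ x ∈ Icc (0:ℝ) r, 0 < f x) ∧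
    (∀ x ∈ Ico (0:ℝ) r, derivWithin (derivWithin f (Icc 0 r)) (Icc 0 r) x < 0) := by
  obtain ⟨hC2, hf0, hg0, hode⟩ := hf
  have hUD : UniqueDiffOn ℝ (Icc (0:ℝ) r) := uniqueDiffOn_Icc hr0
  set g : ℝ → ℝ := derivWithin f (Icc 0 r) with hgdef
  set g' : ℝ → ℝ := derivWithin g (Icc 0 r) with hg'def
  have h0S : (0:ℝ) ∈ Icc (0:ℝ) r := ⟨le_refl 0, hr0.le⟩
  have hdf : DifferentiableOn ℝ f (Icc 0 r) := hC2.differentiableOn two_ne_zero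
  have hgC1 : ContDiffOn ℝ 1 g (Icc 0 r) := hC2.derivWithin hUD (by norm_num)
  have hdg : DifferentiableOn ℝ g (Icc 0 r) := hgC1.differentiableOn one_ne_zero
  have hgcont : ContinuousOn g (Icc 0 r) := hgC1.continuousOn
  have hg'cont : ContinuousOn g' (Icc 0 r) := hgC1.continuousOn_derivWithin hUD le_rfl
  have hfcont : ContinuousOn f (Icc 0 r) := hC2.continuousOn
  set H : ℝ → ℝ := fun x => g x * (x - 1/x) - f x with hHdef
  have hodeH : ∀ x ∈ Ioc (0:ℝ) r, g' x = (1 + g x ^ 2) * H x := by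
    intro x hx
    have := hode x ⟨hx.1.le, hx.2⟩ (ne_of_gt hx.1)
    simpa [hHdef] using this
  -- limits at 0 within (0, r]
  haveI hL : (𝓝[Ioc (0:ℝ) r] (0:ℝ)).NeBot := by
    rw [nhdsWithin_Ioc_eq_nhdsGT hr0]; infer_instance
  have hLle : 𝓝[Ioc (0:ℝ) r] (0:ℝ) ≤ 𝓝[Icc (0:ℝ) r] 0 :=
    nhdsWithin_mono _ Ioc_subset_Icc_self
  have tslope : Tendsto (fun x => g x / x) (𝓝[Ioc (0:ℝ) r] 0) (𝓝 (g' 0)) := by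
    have hd : HasDerivWithinAt g (g' 0) (Icc 0 r) 0 := (hdg 0 h0S).hasDerivWithinAt
    rw [hasDerivWithinAt_iff_tendsto_slope, Icc_diff_left] at hd
    refine hd.congr' ?_
    filter_upwards [self_mem_nhdsWithin] with x hx
    rw [slope_def_field, hg0]
    ring
  have tg : Tendsto g (𝓝[Ioc (0:ℝ) r] 0) (𝓝 0) := by
    have := (hgcont 0 h0S).tendsto
    rw [hg0] at this
    exact this.mono_left hLle
  have tf : Tendsto f (𝓝[Ioc (0:ℝ) r] 0) (𝓝 a) := by
    have := (hfcont 0 h0S).tendsto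
    rw [hf0] at this
    exact this.mono_left hLle
  have tg' : Tendsto g' (𝓝[Ioc (0:ℝ) r] 0) (𝓝 (g' 0)) :=
    (hg'cont 0 h0S).tendsto.mono_left hLle
  have tid : Tendsto (fun x : ℝ => x) (𝓝[Ioc (0:ℝ) r] 0) (𝓝 0) :=
    (continuous_id.tendsto 0).mono_left nhdsWithin_le_nhds
  have tH : Tendsto H (𝓝[Ioc (0:ℝ) r] 0) (𝓝 (0 * 0 - g' 0 - a)) := by
    have t1 := ((tg.mul tid).sub tslope).sub tf
    refine t1.congr fun x => ?_
    simp only [hHdef]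
    ring
  have hg'0 : g' 0 = -(a/2) := by
    have t2 : Tendsto (fun x => (1 + g x ^ 2) * H x) (𝓝[Ioc (0:ℝ) r] 0)
        (𝓝 ((1 + 0 ^ 2) * (0 * 0 - g' 0 - a))) :=
      (tendsto_const_nhds.add (tg.pow 2)).mul tH
    have t3 : Tendsto g' (𝓝[Ioc (0:ℝ) r] 0) (𝓝 ((1 + 0 ^ 2) * (0 * 0 - g' 0 - a))) := by
      refine t2.congr' ?_
      filter_upwards [self_mem_nhdsWithin] with x hx
      exact (hodeH x hx).symm
    have huniq := tendsto_nhds_unique t3 tg'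
    norm_num at huniq
    linarith
  have hev : ∀ᶠ x in 𝓝[Ioc (0:ℝ) r] 0, H x < 0 :=
    tH.eventually_lt_const (by rw [hg'0]; linarith)
  rw [eventually_nhdsWithin_iff, Metric.eventually_nhds_iff] at hev
  obtain ⟨ε, hε, hball⟩ := hev
  -- key monotonicity fact
  have key : ∀ c, c ∈ Ioc (0:ℝ) r → (∀ x ∈ Ioo (0:ℝ) c, H x < 0) → g c < 0 := by
    intro c hc hneg
    have hganti : StrictAntiOn g (Icc 0 c) := by
      apply strictAntiOn_of_deriv_neg (convex_Icc _ _)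
        (hgcont.mono (Icc_subset_Icc_right hc.2))
      intro x hx
      rw [interior_Icc] at hx
      have hmem : Icc (0:ℝ) r ∈ 𝓝 x := Icc_mem_nhds hx.1 (lt_of_lt_of_le hx.2 hc.2)
      rw [← derivWithin_of_mem_nhds hmem, ← hg'def]
      have hx' : x ∈ Ioc (0:ℝ) r := ⟨hx.1, (hx.2.trans_le hc.2).le⟩
      rw [hodeH x hx']
      exact mul_neg_of_pos_of_neg (by positivity) (hneg x hx)
    have h2 := hganti (left_mem_Icc.mpr hc.1.le) (right_mem_Icc.mpr hc.1.le) hc.1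
    rwa [hg0] at h2
  -- H < 0 on (0, r]
  have hHneg : ∀ x ∈ Ioc (0:ℝ) r, H x < 0 := by
    by_contra hcon
    push_neg at hcon
    obtain ⟨b, hb, hHb⟩ := hcon
    set δ := min (ε/2) (b/2) with hδdef
    have hδ0 : 0 < δ := lt_min (by linarith) (by linarith [hb.1])
    have hδb : δ < b := lt_of_le_of_lt (min_le_right _ _) (by linarith [hb.1])
    have hδr : δ ≤ r := le_trans hδb.le hb.2
    have hsmall : ∀ x ∈ Ioc (0:ℝ) δ, H x < 0 := by
      intro x hx
      refine hball ?_ ⟨hx.1, le_trans hx.2 hδr⟩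
      rw [Real.dist_eq, sub_zero, abs_of_pos hx.1]
      have : δ ≤ ε/2 := min_le_left _ _
      linarith [hx.2]
    have hHcontδ : ContinuousOn H (Icc δ r) := by
      have hsub : Icc δ r ⊆ Icc (0:ℝ) r := Icc_subset_Icc_left hδ0.le
      have h1 : ContinuousOn (fun x : ℝ => x - 1/x) (Icc δ r) := by
        refine continuousOn_id.sub (continuousOn_const.div continuousOn_id ?_)
        intro x hx
        exact ne_of_gt (lt_of_lt_of_le hδ0 hx.1)
      rw [hHdef]
      exact ((hgcont.mono hsub).mul h1).sub (hfcont.mono hsub)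
    set K : Set ℝ := Icc δ r ∩ H ⁻¹' Ici 0 with hKdef
    have hKclosed : IsClosed K :=
      hHcontδ.preimage_isClosed_of_isClosed isClosed_Icc isClosed_Ici
    have hKcompact : IsCompact K :=
      IsCompact.of_isClosed_subset isCompact_Icc hKclosed inter_subset_left
    have hbK : b ∈ K := ⟨⟨hδb.le, hb.2⟩, hHb⟩
    obtain ⟨x₀, hx₀K, hx₀lb⟩ := hKcompact.exists_isLeast ⟨b, hbK⟩
    have hx₀δ : δ ≤ x₀ := hx₀K.1.1
    have hx₀r : x₀ ≤ r := hx₀K.1.2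
    have hx₀pos : 0 < x₀ := lt_of_lt_of_le hδ0 hx₀δ
    have hHx₀ : 0 ≤ H x₀ := hx₀K.2
    have hIoo : ∀ x ∈ Ioo (0:ℝ) x₀, H x < 0 := by
      intro x hx
      rcases le_or_gt x δ with hle | hlt
      · exact hsmall x ⟨hx.1, hle⟩
      · by_contra hge
        push_neg at hge
        have hxK : x ∈ K := ⟨⟨hlt.le, le_trans hx.2.le hx₀r⟩, hge⟩
        exact absurd (hx₀lb hxK) (not_le.mpr hx.2)
    have hgx₀ : g x₀ < 0 := key x₀ ⟨hx₀pos, hx₀r⟩ hIoo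
    -- derivative of H at x₀ within [0, x₀]
    have hx₀S : x₀ ∈ Icc (0:ℝ) r := ⟨hx₀pos.le, hx₀r⟩
    have h2 : HasDerivWithinAt (fun x : ℝ => x - 1/x) (1 + 1/x₀^2) (Icc (0:ℝ) r) x₀ := by
      have h2' : HasDerivAt (fun x : ℝ => x - 1/x) (1 - -(x₀^2)⁻¹) x₀ := by
        simpa [one_div] using (hasDerivAt_id x₀).fun_sub (hasDerivAt_inv (ne_of_gt hx₀pos))
      have heq : (1 : ℝ) - -(x₀^2)⁻¹ = 1 + 1/x₀^2 := by ring
      exact (heq ▸ h2').hasDerivWithinAt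
    have h1 : HasDerivWithinAt g (g' x₀) (Icc (0:ℝ) r) x₀ := (hdg x₀ hx₀S).hasDerivWithinAt
    have h3 : HasDerivWithinAt f (g x₀) (Icc (0:ℝ) r) x₀ := (hdf x₀ hx₀S).hasDerivWithinAt
    have hdH : HasDerivWithinAt H
        (g' x₀ * (x₀ - 1/x₀) + g x₀ * (1 + 1/x₀^2) - g x₀) (Icc (0:ℝ) r) x₀ := by
      rw [hHdef]
      exact (h1.mul h2).sub h3
    have hdH' : HasDerivWithinAt H
        (g' x₀ * (x₀ - 1/x₀) + g x₀ * (1 + 1/x₀^2) - g x₀) (Icc (0:ℝ) x₀) x₀ :=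
      hdH.mono (Icc_subset_Icc_right hx₀r)
    rw [hasDerivWithinAt_iff_tendsto_slope, Icc_sdiff_right] at hdH'
    haveI : (𝓝[Ico (0:ℝ) x₀] x₀).NeBot := by
      rw [nhdsWithin_Ico_eq_nhdsLT hx₀pos]; infer_instance
    have hge : 0 ≤ g' x₀ * (x₀ - 1/x₀) + g x₀ * (1 + 1/x₀^2) - g x₀ := by
      refine ge_of_tendsto hdH' ?_
      have hmem : ∀ᶠ x in 𝓝[Ico (0:ℝ) x₀] x₀, x ∈ Ico (0:ℝ) x₀ := eventually_mem_nhdsWithin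
      have hpos : ∀ᶠ x in 𝓝[Ico (0:ℝ) x₀] x₀, 0 < x :=
        eventually_nhdsWithin_of_eventually_nhds (eventually_gt_nhds hx₀pos)
      filter_upwards [hmem, hpos] with x hx hx0
      have hHx : H x < 0 := hIoo x ⟨hx0, hx.2⟩
      have hnum : H x - H x₀ < 0 := by linarith
      have hden : x - x₀ < 0 := by linarith [hx.2]
      have hq : 0 < (H x - H x₀) / (x - x₀) := div_pos_of_neg_of_neg hnum hden
      rw [slope_def_field]
      linarith
    have hg'x₀ : 0 ≤ g' x₀ := by
      rw [hodeH x₀ ⟨hx₀pos, hx₀r⟩]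
      exact mul_nonneg (by positivity) hHx₀
    have hxlt : x₀ - 1/x₀ < 0 := by
      have hx1 : x₀ < 1 := lt_of_le_of_lt hx₀r hr1
      have : x₀ < 1/x₀ := by
        rw [lt_div_iff₀ hx₀pos]
        nlinarith
      linarith
    have hterm1 : g' x₀ * (x₀ - 1/x₀) ≤ 0 := mul_nonpos_of_nonneg_of_nonpos hg'x₀ hxlt.le
    have hterm2 : g x₀ * (1 + 1/x₀^2) - g x₀ = g x₀ * (1/x₀^2) := by ring
    have hterm3 : g x₀ * (1/x₀^2) < 0 := mul_neg_of_neg_of_pos hgx₀ (by positivity)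
    linarith
  -- conclusions
  constructor
  · intro x hx
    rcases eq_or_lt_of_le hx.1 with heq | hlt
    · rw [← heq, hf0]; exact ha
    · have hx' : x ∈ Ioc (0:ℝ) r := ⟨hlt, hx.2⟩
      have h1 : H x < 0 := hHneg x hx'
      have h2 : g x < 0 := key x hx' (fun y hy => hHneg y ⟨hy.1, le_trans hy.2.le hx'.2⟩)
      have hx1 : x < 1 := lt_of_le_of_lt hx.2 hr1
      have h3 : x - 1/x ≤ 0 := by
        have : x < 1/x := by
          rw [lt_div_iff₀ hlt]
          nlinarith
        linarith
      have h4 : 0 ≤ g x * (x - 1/x) := by nlinarith [h2.le, h3]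
      have h5 : g x * (x - 1/x) - f x < 0 := by
        have := h1
        simp only [hHdef] at this
        exact this
      linarith
  · intro x hx
    rcases eq_or_lt_of_le hx.1 with heq | hlt
    · rw [← heq, hg'0]; linarith
    · have hx' : x ∈ Ioc (0:ℝ) r := ⟨hlt, hx.2.le⟩
      rw [hodeH x hx']
      exact mul_neg_of_pos_of_neg (by positivity) (hHneg x hx')
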